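/- Uniform continuity of the ratio of renewal functions: let $L : [0,\infty) \to [1,\infty)$ be a continuous non-decreasing function with $L(0)=1$ and $\lim_{x \to \infty} L(x)/x = c_0$ for some $c_0 > 0$. Let $(c_n)$ and $(b_n)$ be sequences of positive reals with $c_n \to \infty$ and $c_n/\sqrt{b_n} \to 0$. Then $\sup_{x \ge c_n} \left| \frac{L((x - c_n)/\sqrt{b_n})}{L(x/\sqrt{b_n})} - 1 \right| \to 0$ as $n \to \infty$. -/
import Mathlib


open Filter

/-- Uniform continuity of the ratio of renewal functions: if `L` is continuous,
non-decreasing, bounded below by `1`, `L(0) = 1` and `L(x) ~ c₀ x` at infinity, and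
`c n → ∞`, `b n → ∞`, `c n / √(b n) → 0`, then
`sup_{x ≥ c n} |L((x - c n)/√(b n)) / L(x/√(b n)) - 1| → 0`. -/
theorem stmt7 (L : ℝ → ℝ)
    (hcont : ContinuousOn L (Set.Ici 0))
    (hmono : MonotoneOn L (Set.Ici 0))
    (hL1 : ∀ x ≥ (0 : ℝ), 1 ≤ L x)
    (hL0 : L 0 = 1)
    (c0 : ℝ) (hc0 : 0 < c0)
    (hlim : Tendsto (fun x => L x / x) atTop (nhds c0))
    (c b : ℕ → ℝ) (hcpos : ∀ n, 0 < c n) (hbpos : ∀ n, 0 < b n)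
    (hc : Tendsto c atTop atTop) (hb : Tendsto b atTop atTop)
    (hratio : Tendsto (fun n => c n / Real.sqrt (b n)) atTop (nhds 0)) :
    ∀ ε > (0 : ℝ), ∃ N : ℕ, ∀ n ≥ N, ∀ x ≥ c n,
      |L ((x - c n) / Real.sqrt (b n)) / L (x / Real.sqrt (b n)) - 1| ≤ ε := by
  intro ε hε
  -- choose η
  set η : ℝ := min (c0 / 2) (ε * c0 / 8) with hηdef
  have hηpos : 0 < η := lt_min (by linarith) (by positivity)
  have hη1 : η ≤ c0 / 2 := min_le_left _ _
  have hη2 : η ≤ ε * c0 / 8 := min_le_right _ _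
  -- choose M from the asymptotic
  have hMev : ∀ᶠ x in atTop, dist (L x / x) c0 ≤ η :=
    hlim.eventually (Metric.closedBall_mem_nhds c0 hηpos)
  rw [eventually_atTop] at hMev
  obtain ⟨M0, hM0⟩ := hMev
  set M : ℝ := max M0 1 with hMdef
  have hM1 : (1 : ℝ) ≤ M := le_max_right _ _
  have hMpos : 0 < M := by linarith
  have hMb : ∀ y : ℝ, M ≤ y → (c0 - η) * y ≤ L y ∧ L y ≤ (c0 + η) * y := by
    intro y hy
    have hy0 : 0 < y := lt_of_lt_of_le hMpos hy
    have := hM0 y (le_trans (le_max_left _ _) hy)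
    rw [Real.dist_eq, abs_le] at this
    constructor
    · have : c0 - η ≤ L y / y := by linarith [this.1]
      calc (c0 - η) * y ≤ (L y / y) * y := by nlinarith
        _ = L y := by field_simp
    · have h2 : L y / y ≤ c0 + η := by linarith [this.2]
      calc L y = (L y / y) * y := by field_simp
        _ ≤ (c0 + η) * y := by nlinarith
  -- uniform continuity on [0, 2M]
  have hUC : UniformContinuousOn L (Set.Icc (0 : ℝ) (2 * M)) :=
    (isCompact_Icc).uniformContinuousOn_of_continuous
      (hcont.mono (fun z hz => hz.1))
  rw [Metric.uniformContinuousOn_iff] at hUC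
  obtain ⟨δ0, hδ0pos, hδ0⟩ := hUC ε hε
  -- choose K and N
  set K : ℝ := min δ0 (min M (ε * M / 2)) with hKdef
  have hKpos : 0 < K := lt_min hδ0pos (lt_min hMpos (by positivity))
  have hev : ∀ᶠ n in atTop, c n / Real.sqrt (b n) < K :=
    hratio.eventually_lt_const hKpos
  rw [eventually_atTop] at hev
  obtain ⟨N, hN⟩ := hev
  refine ⟨N, fun n hn x hx => ?_⟩
  have hs : 0 < Real.sqrt (b n) := Real.sqrt_pos.2 (hbpos n)
  set δ : ℝ := c n / Real.sqrt (b n) with hδdef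
  set u : ℝ := x / Real.sqrt (b n) with hudef
  have hδpos : 0 < δ := div_pos (hcpos n) hs
  have hδK : δ < K := hN n hn
  have hδδ0 : δ < δ0 := lt_of_lt_of_le hδK (min_le_left _ _)
  have hδM : δ < M := lt_of_lt_of_le hδK (le_trans (min_le_right _ _) (min_le_left _ _))
  have hδεM : δ ≤ ε * M / 2 :=
    le_of_lt (lt_of_lt_of_le hδK (le_trans (min_le_right _ _) (min_le_right _ _)))
  have hδu : δ ≤ u := by
    rw [hδdef, hudef]; gcongr
  have hu0 : 0 ≤ u := le_trans hδpos.le hδu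
  have huδ0 : 0 ≤ u - δ := by linarith
  have hrw : (x - c n) / Real.sqrt (b n) = u - δ := by
    rw [hudef, hδdef, sub_div]
  rw [hrw]
  have hLmono : L (u - δ) ≤ L u :=
    hmono (Set.mem_Ici.2 huδ0) (Set.mem_Ici.2 hu0) (by linarith)
  have hLu1 : 1 ≤ L u := hL1 u hu0
  have hLupos : 0 < L u := by linarith
  have hLuδ1 : 1 ≤ L (u - δ) := hL1 _ huδ0
  -- key estimate
  have key : L u - L (u - δ) ≤ ε * L u := by
    by_cases hcase : u ≤ 2 * M
    · -- uniform continuity case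
      have hm1 : u - δ ∈ Set.Icc (0 : ℝ) (2 * M) := ⟨huδ0, by linarith⟩
      have hm2 : u ∈ Set.Icc (0 : ℝ) (2 * M) := ⟨hu0, hcase⟩
      have hdist : dist (u - δ) u < δ0 := by
        rw [Real.dist_eq]
        rw [show u - δ - u = -δ by ring, abs_neg, abs_of_pos hδpos]
        exact hδδ0
      have := hδ0 (u - δ) hm1 u hm2 hdist
      rw [Real.dist_eq, abs_lt] at this
      nlinarith [this.1]
    · -- asymptotic case
      push_neg at hcase
      have huM : M ≤ u := by linarith
      have huδM : M ≤ u - δ := by linarith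
      obtain ⟨hlowu, hup⟩ := hMb u huM
      obtain ⟨hlowδ, _⟩ := hMb (u - δ) huδM
      nlinarith [mul_le_mul_of_nonneg_right hη2 hu0,
        mul_le_mul_of_nonneg_left hδεM hc0.le,
        mul_le_mul_of_nonneg_left hlowu hε.le,
        mul_nonneg (mul_nonneg hε.le hc0.le) (by linarith : (0:ℝ) ≤ u - 2 * M),
        mul_le_mul_of_nonneg_right (mul_le_mul_of_nonneg_left hη1 hε.le) hu0,
        mul_nonneg hηpos.le hδpos.le]
  -- conclude
  have hr : L (u - δ) / L u ≤ 1 := (div_le_one hLupos).2 hLmono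
  rw [abs_of_nonpos (by linarith)]
  have : 1 - L (u - δ) / L u ≤ ε := by
    rw [show (1 : ℝ) - L (u - δ) / L u = (L u - L (u - δ)) / L u by field_simp]
    rw [div_le_iff₀ hLupos]
    exact key
  linarith
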